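/- Let Ω ⊂ ℝⁿ be open and let w ∈ C²(Ω) satisfy Δw = β_ε(w) in Ω, where β_ε(s) = (1/ε)β(s/ε) with β Lipschitz. Set B_ε(z) = ∫₀^z β_ε(s) ds and χ_ε(x) = 2B_ε(w(x)). Then for every φ ∈ C¹_c(Ω; ℝⁿ), ∫_Ω (|∇w|² div φ − 2 (∇w)ᵀ (Dφ) ∇w + χ_ε div φ) dx = 0. -/

import Mathlib

open MeasureTheory Metric Set Filter
open scoped Topology ENNReal NNReal RealInnerProductSpace

noncomputable section

/-- Euclidean space `ℝⁿ`. -/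
abbrev En (n : ℕ) := EuclideanSpace ℝ (Fin n)

/-- The Laplacian of a scalar function, as the sum of second partial derivatives. -/
def lap {n : ℕ} (u : En n → ℝ) (x : En n) : ℝ :=
  ∑ i, fderiv ℝ (fun y => fderiv ℝ u y (EuclideanSpace.single i 1)) x
    (EuclideanSpace.single i 1)

/-- The divergence of a vector field. -/
def dvg {n : ℕ} (φ : En n → En n) (x : En n) : ℝ :=
  ∑ i, fderiv ℝ (fun y => φ y i) x (EuclideanSpace.single i 1)

set_option maxHeartbeats 2000000 in
/-- Domain variation (Pohozaev type) identity: if `Δ w = β_ε(w)` in an open set `Ω`,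
`B_ε` is the primitive of `β_ε` vanishing at `0` and `χ_ε = 2 B_ε ∘ w`, then for every
`C¹` compactly supported vector field `φ` with support in `Ω`,
`∫_Ω |∇w|² div φ − 2 (∇w)ᵀ Dφ ∇w + χ_ε div φ = 0`. -/
theorem stmt0 {n : ℕ} (Ω : Set (En n)) (hΩ : IsOpen Ω)
    (β : ℝ → ℝ) (L : NNReal) (hβlip : LipschitzWith L β)
    (ε : ℝ) (hε : 0 < ε)
    (βε : ℝ → ℝ) (hβε : ∀ s, βε s = ε⁻¹ * β (s / ε))
    (w : En n → ℝ) (hw : ContDiffOn ℝ 2 w Ω)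
    (hpde : ∀ x ∈ Ω, lap w x = βε (w x))
    (Bε : ℝ → ℝ) (hBε : ∀ z, Bε z = ∫ s in (0:ℝ)..z, βε s)
    (χε : En n → ℝ) (hχ : ∀ x, χε x = 2 * Bε (w x))
    (φ : En n → En n) (hφ1 : ContDiff ℝ 1 φ) (hφc : HasCompactSupport φ)
    (hφΩ : tsupport φ ⊆ Ω) :
    ∫ x in Ω, (‖gradient w x‖ ^ 2 * dvg φ x
      - 2 * ⟪(fderiv ℝ φ x) (gradient w x), gradient w x⟫
      + χε x * dvg φ x) = 0 := by
  classical
  set e : Fin n → En n := fun i => EuclideanSpace.single i 1 with he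
  -- basic continuity facts
  have hβεc : Continuous βε := by
    have h1 : Continuous fun s : ℝ => ε⁻¹ * β (s / ε) :=
      continuous_const.mul (hβlip.continuous.comp (continuous_id.div_const ε))
    have : βε = fun s : ℝ => ε⁻¹ * β (s / ε) := funext hβε
    rw [this]; exact h1
  have hBd : ∀ z, HasDerivAt Bε (βε z) z := by
    intro z
    have h1 : HasDerivAt (fun u => ∫ s in (0:ℝ)..u, βε s) (βε z) z :=
      intervalIntegral.integral_hasDerivAt_right (hβεc.intervalIntegrable _ _)
        (hβεc.stronglyMeasurableAtFilter _ _) hβεc.continuousAt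
    have : Bε = fun u => ∫ s in (0:ℝ)..u, βε s := funext hBε
    rw [this]; exact h1
  have hB1 : ContDiff ℝ 1 Bε := by
    rw [contDiff_one_iff_deriv]
    refine ⟨fun z => (hBd z).differentiableAt, ?_⟩
    have : deriv Bε = βε := funext fun z => (hBd z).deriv
    rw [this]; exact hβεc
  -- the gradient field
  set G : En n → En n := fun y => gradient w y with hGdef
  have hGinner : ∀ y v, ⟪G y, v⟫ = fderiv ℝ w y v := fun y v =>
    InnerProductSpace.toDual_symm_apply
  have hcomp : ∀ (u : En n) (j : Fin n), ⟪u, e j⟫ = u j := by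
    intro u j
    simp [he, EuclideanSpace.inner_single_right]
  -- smoothness of pieces on Ω
  have hfd1 : ContDiffOn ℝ 1 (fderiv ℝ w) Ω :=
    hw.fderiv_of_isOpen hΩ (by norm_num)
  have hG1 : ContDiffOn ℝ 1 G Ω := by
    have hL : ContDiff ℝ 1 fun p : StrongDual ℝ (En n) =>
        (InnerProductSpace.toDual ℝ (En n)).symm p :=
      (InnerProductSpace.toDual ℝ (En n)).symm.toContinuousLinearEquiv
        |>.toContinuousLinearMap.contDiff
    exact hL.comp_contDiffOn hfd1
  have hχfun : χε = fun y => 2 * Bε (w y) := funext hχ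
  have hχ1 : ContDiffOn ℝ 1 χε Ω := by
    rw [hχfun]
    exact contDiffOn_const.mul (hB1.comp_contDiffOn (hw.of_le (by norm_num)))
  -- the vector field V
  set V : En n → En n := fun y =>
    (⟪G y, G y⟫ + χε y) • φ y - (2 * ⟪G y, φ y⟫) • G y with hVdef
  have hV1 : ContDiffOn ℝ 1 V Ω := by
    refine ContDiffOn.sub ?_ ?_
    · exact ((hG1.inner (𝕜 := ℝ) hG1).add hχ1).smul hφ1.contDiffOn
    · exact (contDiffOn_const.mul (hG1.inner (𝕜 := ℝ) hφ1.contDiffOn)).smul hG1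
  have hV0 : ∀ y, φ y = 0 → V y = 0 := by
    intro y h
    simp [hVdef, h]
  have hφev : ∀ x ∉ tsupport φ, φ =ᶠ[𝓝 x] 0 := fun x hx =>
    eventually_of_mem ((isClosed_tsupport φ).isOpen_compl.mem_nhds hx)
      (fun y hy => image_eq_zero_of_notMem_tsupport hy)
  have hVev : ∀ x ∉ tsupport φ, V =ᶠ[𝓝 x] 0 := fun x hx =>
    (hφev x hx).mono fun y hy => hV0 y hy
  have hVd : Differentiable ℝ V := by
    intro x
    by_cases hx : x ∈ Ω
    · exact (hV1.contDiffAt (hΩ.mem_nhds hx)).differentiableAt one_ne_zero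
    · have hx' : x ∉ tsupport φ := fun hc => hx (hφΩ hc)
      exact (differentiableAt_const (0 : En n)).congr_of_eventuallyEq (hVev x hx')
  have hVf0 : ∀ x ∉ tsupport φ, fderiv ℝ V x = 0 := by
    intro x hx
    rw [(hVev x hx).fderiv_eq]
    exact fderiv_const_apply 0
  have hVfc : Continuous (fderiv ℝ V) := by
    rw [continuous_iff_continuousAt]
    intro x
    by_cases hx : x ∈ Ω
    · exact (hV1.continuousOn_fderiv_of_isOpen hΩ le_rfl).continuousAt (hΩ.mem_nhds hx)
    · have hx' : x ∉ tsupport φ := fun hc => hx (hφΩ hc)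
      have hev : fderiv ℝ V =ᶠ[𝓝 x] fun _ => 0 := by
        filter_upwards [(isClosed_tsupport φ).isOpen_compl.mem_nhds hx'] with y hy
        exact hVf0 y hy
      exact continuousAt_const.congr hev.symm
  -- each component integral of the derivative vanishes
  have hVc : Continuous V := hVd.continuous
  have key : ∀ i : Fin n, ∫ x, (fderiv ℝ V x (e i)) i = 0 := by
    intro i
    have hproj : ∀ x v, fderiv ℝ (fun y => V y i) x v = (fderiv ℝ V x v) i := by
      intro x v
      have h1 : HasFDerivAt (fun y => V y i)
          ((EuclideanSpace.proj (𝕜 := ℝ) i).comp (fderiv ℝ V x)) x :=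
        (EuclideanSpace.proj (𝕜 := ℝ) i).hasFDerivAt.comp x (hVd x).hasFDerivAt
      rw [h1.fderiv]
      rfl
    have hgd : Differentiable ℝ (fun y => V y i) := fun y =>
      ((EuclideanSpace.proj (𝕜 := ℝ) i).differentiable.comp hVd) y
    have hint1 : Integrable (fun x => (fderiv ℝ V x (e i)) i) := by
      apply Continuous.integrable_of_hasCompactSupport
      · exact (EuclideanSpace.proj (𝕜 := ℝ) i).continuous.comp
          ((ContinuousLinearMap.apply ℝ (En n) (e i)).continuous.comp hVfc)
      · apply HasCompactSupport.intro' hφc (isClosed_tsupport φ)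
        intro x hx
        simp [hVf0 x hx]
    have hint2 : Integrable (fun x => V x i) := by
      apply Continuous.integrable_of_hasCompactSupport
      · exact (EuclideanSpace.proj (𝕜 := ℝ) i).continuous.comp hVc
      · apply HasCompactSupport.intro' hφc (isClosed_tsupport φ)
        intro x hx
        simp [hV0 x (image_eq_zero_of_notMem_tsupport hx)]
    have h0 : ∫ x, (1:ℝ) * fderiv ℝ (fun y => V y i) x (e i)
        = -∫ x, (fderiv ℝ (fun _ => (1:ℝ)) x (e i)) * (V x i) := by
      apply integral_mul_fderiv_eq_neg_fderiv_mul_of_integrable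
      · simpa [fderiv_const_apply] using (integrable_zero (En n) ℝ volume)
      · simpa [hproj] using hint1
      · simpa using hint2
      · exact fun x _ => differentiableAt_const 1
      · exact fun x _ => hgd x
    simpa [hproj, fderiv_const_apply] using h0
  -- pointwise identity
  have hpt : ∀ x, (‖gradient w x‖ ^ 2 * dvg φ x
      - 2 * ⟪(fderiv ℝ φ x) (gradient w x), gradient w x⟫
      + χε x * dvg φ x) = ∑ i, (fderiv ℝ V x (e i)) i := by
    intro x
    by_cases hx : x ∈ Ω
    swap
    · have hx' : x ∉ tsupport φ := fun hc => hx (hφΩ hc)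
      have hφf : fderiv ℝ φ x = 0 := by
        rw [(hφev x hx').fderiv_eq]; exact fderiv_const_apply 0
      have hdvg : dvg φ x = 0 := by
        apply Finset.sum_eq_zero; intro i _
        have h2 : (fun y => φ y i) =ᶠ[𝓝 x] fun _ => (0:ℝ) :=
          (hφev x hx').mono fun y hy => by
            have h3 : φ y = 0 := by simpa using hy
            simp [h3]
        rw [h2.fderiv_eq, fderiv_const_apply]; rfl
      simp [hdvg, hφf, hVf0 x hx']
    -- now the main computation at `x ∈ Ω`
    · have hwdiff : ∀ y ∈ Ω, DifferentiableAt ℝ w y := fun y hy =>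
        (hw.contDiffAt (hΩ.mem_nhds hy)).differentiableAt (by norm_num)
      set c := fderiv ℝ w x with hc
      have hca : ContDiffAt ℝ 2 w x := hw.contDiffAt (hΩ.mem_nhds hx)
      have hf''d : DifferentiableAt ℝ (fderiv ℝ w) x :=
        (hca.fderiv_right (m := 1) (by norm_num)).differentiableAt one_ne_zero
      set f'' := fderiv ℝ (fderiv ℝ w) x with hf''def
      have hf'' : HasFDerivAt (fderiv ℝ w) f'' x := hf''d.hasFDerivAt
      have hevd : ∀ᶠ y in 𝓝 x, HasFDerivAt w (fderiv ℝ w y) y := by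
        filter_upwards [hΩ.mem_nhds hx] with y hy using (hwdiff y hy).hasFDerivAt
      have hsym : ∀ u v, f'' u v = f'' v u := fun u v =>
        second_derivative_symmetric_of_eventually hevd hf'' u v
      set Lc : StrongDual ℝ (En n) ≃L[ℝ] En n :=
        (InnerProductSpace.toDual ℝ (En n)).symm.toContinuousLinearEquiv with hLcdef
      have hGL : G = fun y => (Lc : StrongDual ℝ (En n) →L[ℝ] En n) (fderiv ℝ w y) := by
        funext y; rfl
      set H : En n →L[ℝ] En n := (Lc : StrongDual ℝ (En n) →L[ℝ] En n).comp f'' with hHdef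
      have hGx : HasFDerivAt G H x := by
        rw [hGL]
        exact ((Lc : StrongDual ℝ (En n) →L[ℝ] En n).hasFDerivAt).comp x hf''
      have hHip : ∀ v u, ⟪H v, u⟫ = f'' v u := by
        intro v u
        have : H v = (InnerProductSpace.toDual ℝ (En n)).symm (f'' v) := rfl
        rw [this, InnerProductSpace.toDual_symm_apply]
      have hwx : HasFDerivAt w c x := (hwdiff x hx).hasFDerivAt
      have hφx : HasFDerivAt φ (fderiv ℝ φ x) x := (hφ1.differentiable one_ne_zero x).hasFDerivAt
      set Φ := fderiv ℝ φ x with hΦdef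
      have hχx : HasFDerivAt χε ((2:ℝ) • (βε (w x) • c)) x := by
        rw [hχfun]
        exact HasFDerivAt.const_mul ((hBd (w x)).comp_hasFDerivAt x hwx) 2
      have hGGx : HasFDerivAt (fun y => ⟪G y, G y⟫)
          ((fderivInnerCLM ℝ (G x, G x)).comp (H.prod H)) x := hGx.inner ℝ hGx
      have hGφx : HasFDerivAt (fun y => ⟪G y, φ y⟫)
          ((fderivInnerCLM ℝ (G x, φ x)).comp (H.prod Φ)) x := hGx.inner ℝ hφx
      have hax : HasFDerivAt (fun y => ⟪G y, G y⟫ + χε y)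
          ((fderivInnerCLM ℝ (G x, G x)).comp (H.prod H) + (2:ℝ) • (βε (w x) • c)) x :=
        hGGx.add hχx
      have hsx : HasFDerivAt (fun y => 2 * ⟪G y, φ y⟫)
          ((2:ℝ) • ((fderivInnerCLM ℝ (G x, φ x)).comp (H.prod Φ))) x :=
        HasFDerivAt.const_mul hGφx 2
      have hVx : HasFDerivAt V
          (((⟪G x, G x⟫ + χε x) • Φ +
            ((fderivInnerCLM ℝ (G x, G x)).comp (H.prod H) + (2:ℝ) • (βε (w x) • c)).smulRight (φ x))
          - ((2 * ⟪G x, φ x⟫) • H +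
            ((2:ℝ) • ((fderivInnerCLM ℝ (G x, φ x)).comp (H.prod Φ))).smulRight (G x))) x := by
        rw [hVdef]
        exact (hax.smul hφx).sub (hsx.smul hGx)
      have hfV := hVx.fderiv
      -- divergence and Laplacian in terms of `Φ` and `f''`
      have hdvg : dvg φ x = ∑ i, (Φ (e i)) i := by
        apply Finset.sum_congr rfl; intro i _
        have h1 : HasFDerivAt (fun y => φ y i)
            ((EuclideanSpace.proj (𝕜 := ℝ) i).comp Φ) x :=
          (EuclideanSpace.proj (𝕜 := ℝ) i).hasFDerivAt.comp x hφx
        rw [h1.fderiv]; rfl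
      have hlap : ∑ i, f'' (e i) (e i) = βε (w x) := by
        rw [← hpde x hx]
        apply Finset.sum_congr rfl; intro i _
        have h1 : HasFDerivAt (fun y => fderiv ℝ w y (e i))
            ((ContinuousLinearMap.apply ℝ ℝ (e i)).comp f'') x :=
          (ContinuousLinearMap.apply ℝ ℝ (e i)).hasFDerivAt.comp x hf''
        rw [h1.fderiv]; rfl
      have hlin : ∀ (g : En n →L[ℝ] ℝ) (u : En n), ∑ j, g (e j) * u j = g u := by
        intro g u
        have hu : ∑ j, u j • e j = u := by
          simpa [EuclideanSpace.basisFun_apply] using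
            (EuclideanSpace.basisFun (Fin n) ℝ).sum_repr u
        conv_rhs => rw [← hu]
        rw [map_sum]
        simp [mul_comm]
      have hGxj : ∀ j, G x j = c (e j) := fun j => by rw [← hcomp (G x) j, hGinner]
      -- per-term expansion of the divergence of V
      have hterm : ∀ i, (fderiv ℝ V x (e i)) i =
          (⟪G x, G x⟫ + χε x) * (Φ (e i)) i
          + 2 * (f'' (e i) (G x) * φ x i)
          + 2 * βε (w x) * (c (e i) * φ x i)
          - 2 * ⟪G x, φ x⟫ * (f'' (e i) (e i))
          - 2 * (⟪G x, Φ (e i)⟫ * G x i)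
          - 2 * (f'' (e i) (φ x) * G x i) := by
        intro i
        rw [hfV]
        have h1 : ⟪G x, H (e i)⟫ = f'' (e i) (G x) := by
          rw [real_inner_comm]; exact hHip _ _
        have h2 : ⟪H (e i), G x⟫ = f'' (e i) (G x) := hHip _ _
        have h3 : ⟪H (e i), φ x⟫ = f'' (e i) (φ x) := hHip _ _
        have h4 : (H (e i)) i = f'' (e i) (e i) := by
          rw [← hcomp (H (e i)) i]; exact hHip _ _
        simp only [ContinuousLinearMap.sub_apply, ContinuousLinearMap.add_apply,
          ContinuousLinearMap.smul_apply, ContinuousLinearMap.smulRight_apply,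
          ContinuousLinearMap.comp_apply, ContinuousLinearMap.prod_apply,
          fderivInnerCLM_apply, PiLp.sub_apply, PiLp.add_apply, PiLp.smul_apply,
          smul_eq_mul, h1, h2, h3, h4]
        ring
      rw [Finset.sum_congr rfl fun i _ => hterm i]
      -- sum each piece
      have hS1 : ∑ i, (⟪G x, G x⟫ + χε x) * (Φ (e i)) i
          = (⟪G x, G x⟫ + χε x) * dvg φ x := by rw [← Finset.mul_sum, hdvg]
      have hS2 : ∑ i, 2 * (f'' (e i) (G x) * φ x i) = 2 * f'' (G x) (φ x) := by
        rw [← Finset.mul_sum]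
        congr 1
        calc ∑ i, f'' (e i) (G x) * φ x i = ∑ i, f'' (G x) (e i) * φ x i := by
              apply Finset.sum_congr rfl; intro i _; rw [hsym]
          _ = f'' (G x) (φ x) := hlin _ _
      have hS3 : ∑ i, 2 * βε (w x) * (c (e i) * φ x i) = 2 * βε (w x) * ⟪G x, φ x⟫ := by
        rw [← Finset.mul_sum]
        congr 1
        rw [hlin c (φ x), ← hGinner]
      have hS4 : ∑ i, 2 * ⟪G x, φ x⟫ * (f'' (e i) (e i)) = 2 * ⟪G x, φ x⟫ * βε (w x) := by
        rw [← Finset.mul_sum, hlap]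
      have hS5 : ∑ i, 2 * (⟪G x, Φ (e i)⟫ * G x i) = 2 * ⟪G x, Φ (G x)⟫ := by
        rw [← Finset.mul_sum]
        congr 1
        have h5 : ∀ i, ⟪G x, Φ (e i)⟫ = ((innerSL ℝ (G x)).comp Φ) (e i) := fun i => rfl
        calc ∑ i, ⟪G x, Φ (e i)⟫ * G x i
            = ∑ i, ((innerSL ℝ (G x)).comp Φ) (e i) * G x i := by
              apply Finset.sum_congr rfl; intro i _; rw [h5]
          _ = ((innerSL ℝ (G x)).comp Φ) (G x) := hlin _ _
          _ = ⟪G x, Φ (G x)⟫ := rfl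
      have hS6 : ∑ i, 2 * (f'' (e i) (φ x) * G x i) = 2 * f'' (G x) (φ x) := by
        rw [← Finset.mul_sum]
        congr 1
        calc ∑ i, f'' (e i) (φ x) * G x i = ∑ i, f'' (φ x) (e i) * G x i := by
              apply Finset.sum_congr rfl; intro i _; rw [hsym]
          _ = f'' (φ x) (G x) := hlin _ _
          _ = f'' (G x) (φ x) := hsym _ _
      rw [Finset.sum_sub_distrib, Finset.sum_sub_distrib, Finset.sum_sub_distrib,
        Finset.sum_add_distrib, Finset.sum_add_distrib, hS1, hS2, hS3, hS4, hS5, hS6]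
      have hgG : gradient w x = G x := rfl
      have hΦG : (fderiv ℝ φ x) (gradient w x) = Φ (G x) := rfl
      rw [hgG, hΦG, real_inner_comm (Φ (G x)) (G x), ← real_inner_self_eq_norm_sq]
      ring
  -- put everything together
  have hset : (∫ x in Ω, (‖gradient w x‖ ^ 2 * dvg φ x
      - 2 * ⟪(fderiv ℝ φ x) (gradient w x), gradient w x⟫
      + χε x * dvg φ x))
      = ∫ x, ∑ i, (fderiv ℝ V x (e i)) i := by
    rw [show (fun x => (‖gradient w x‖ ^ 2 * dvg φ x
      - 2 * ⟪(fderiv ℝ φ x) (gradient w x), gradient w x⟫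
      + χε x * dvg φ x)) = fun x => ∑ i, (fderiv ℝ V x (e i)) i from funext hpt]
    apply setIntegral_eq_integral_of_forall_compl_eq_zero
    intro x hx
    have hx' : x ∉ tsupport φ := fun hc => hx (hφΩ hc)
    simp [hVf0 x hx']
  rw [hset]
  rw [integral_finset_sum]
  · exact Finset.sum_eq_zero fun i _ => key i
  · intro i _
    apply Continuous.integrable_of_hasCompactSupport
    · exact (EuclideanSpace.proj (𝕜 := ℝ) i).continuous.comp
        ((ContinuousLinearMap.apply ℝ (En n) (e i)).continuous.comp hVfc)
    · apply HasCompactSupport.intro' hφc (isClosed_tsupport φ)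
      intro x hx
      simp [hVf0 x hx]
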